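/- Let (R, m) be a commutative Noetherian local ring with depth(R) ≤ 1 and let M be a finitely generated R-module. Then a finitely generated free R-module F is a direct summand of M^* if and only if F is a direct summand of M. -/

import Mathlib

open IsLocalRing

universe u v

/-- The depth of a module `M` over a Noetherian local ring `(R, m)`: the supremum of the
lengths of `M`-regular sequences consisting of elements of `m`. -/
noncomputable def rdepth (R : Type*) (M : Type*) [CommRing R] [IsLocalRing R]
    [AddCommGroup M] [Module R M] : ℕ :=
  sSup {n : ℕ | ∃ rs : List R, rs.length = n ∧ (∀ r ∈ rs, r ∈ maximalIdeal R) ∧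
    RingTheory.Sequence.IsRegular M rs}

/-- `F` is a direct summand of `M`: there is a split injection `F → M`. -/
def IsDirectSummand (R : Type u) (F M : Type v) [CommRing R]
    [AddCommGroup F] [Module R F] [AddCommGroup M] [Module R M] : Prop :=
  ∃ (f : F →ₗ[R] M) (g : M →ₗ[R] F), g ∘ₗ f = LinearMap.id


open IsLocalRing

section ColonPrimes

variable {R : Type*} [CommRing R]

/-- The set of "associated primes" of `R ⧸ K`, expressed with colon ideals. -/
def colonPrimes (K : Ideal R) : Set (Ideal R) :=
  {P : Ideal R | P.IsPrime ∧ ∃ y, y ∉ K ∧ P = K.colon (Ideal.span {y})}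

lemma mem_colon_singleton' {K : Ideal R} {y r : R} :
    r ∈ K.colon (Ideal.span {y}) ↔ r * y ∈ K := by
  rw [Submodule.mem_colon]
  constructor
  · intro h; simpa using h y (Ideal.mem_span_singleton_self y)
  · intro h s hs
    obtain ⟨c, rfl⟩ := Ideal.mem_span_singleton'.mp hs
    rw [smul_eq_mul, show r * (c * y) = c * (r * y) by ring]
    exact K.mul_mem_left c h

/-- A maximal element among colon ideals (containing a given one) is prime. -/
lemma exists_max_colon_prime [IsNoetherianRing R] (K : Ideal R) {y : R} (hy : y ∉ K) :
    ∃ p ∈ colonPrimes K, K.colon (Ideal.span {y}) ≤ p := by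
  obtain ⟨p, ⟨⟨y₀, hy₀, hp⟩, hple⟩, hmax⟩ :=
    (set_has_maximal_iff_noetherian.mpr inferInstance)
      {J : Ideal R | (∃ y', y' ∉ K ∧ J = K.colon (Ideal.span {y'})) ∧
        K.colon (Ideal.span {y}) ≤ J}
      ⟨K.colon (Ideal.span {y}), ⟨y, hy, rfl⟩, le_rfl⟩
  have hyK : ∀ r : R, r ∈ p ↔ r * y₀ ∈ K := fun r => hp ▸ mem_colon_singleton'
  refine ⟨p, ⟨?_, y₀, hy₀, hp⟩, hple⟩
  constructor
  · intro h
    exact hy₀ (by simpa using (hyK 1).mp (h ▸ Submodule.mem_top))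
  · intro a b hab
    by_contra hcon
    push_neg at hcon
    obtain ⟨ha, hb⟩ := hcon
    have hby₀ : b * y₀ ∉ K := fun h => hb ((hyK b).mpr h)
    have hle : p ≤ K.colon (Ideal.span {b * y₀}) := by
      intro r hr
      rw [mem_colon_singleton', show r * (b * y₀) = b * (r * y₀) by ring]
      exact K.mul_mem_left b ((hyK r).mp hr)
    have hq : K.colon (Ideal.span {b * y₀}) ∈
        {J : Ideal R | (∃ y', y' ∉ K ∧ J = K.colon (Ideal.span {y'})) ∧
          K.colon (Ideal.span {y}) ≤ J} := ⟨⟨b * y₀, hby₀, rfl⟩, le_trans hple hle⟩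
    have heq : p = K.colon (Ideal.span {b * y₀}) := by
      by_contra hne
      exact hmax _ hq (lt_of_le_of_ne hle hne)
    apply ha
    rw [hyK a]
    have : a ∈ K.colon (Ideal.span {b * y₀}) := by
      rw [mem_colon_singleton', show a * (b * y₀) = a * b * y₀ by ring]
      exact (hyK _).mp hab
    exact (hyK a).mp (heq ▸ this)

lemma colonPrimes_finite [IsNoetherianRing R] (K : Ideal R) : (colonPrimes K).Finite := by
  have wf : WellFounded ((· > ·) : Ideal R → Ideal R → Prop) :=
    (inferInstance : WellFoundedGT (Ideal R)).wf
  induction K using WellFounded.induction wf with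
  | _ K IH =>
  by_cases hK : K = ⊤
  · subst hK
    convert Set.finite_empty
    ext P
    simp only [colonPrimes, Set.mem_setOf_eq, Set.mem_empty_iff_false, iff_false, not_and]
    rintro - ⟨y, hy, -⟩
    exact hy trivial
  obtain ⟨p, ⟨hpprime, y₀, hy₀, hp⟩, -⟩ :=
    exists_max_colon_prime K ((Ideal.ne_top_iff_one K).mp hK)
  have hyK : ∀ r : R, r ∈ p ↔ r * y₀ ∈ K := fun r => hp ▸ mem_colon_singleton'
  have hlt : K < K ⊔ Ideal.span {y₀} := by
    refine lt_of_le_of_ne le_sup_left fun h => hy₀ ?_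
    rw [h]
    exact Ideal.mem_sup_right (Ideal.mem_span_singleton_self y₀)
  have hfin' := IH _ hlt
  refine Set.Finite.subset (hfin'.insert p) ?_
  rintro P ⟨hPp, y, hyP, hPy⟩
  have hPiff : ∀ r : R, r ∈ P ↔ r * y ∈ K := fun r => hPy ▸ mem_colon_singleton'
  by_cases hcase : ∃ a, a * y ∉ K ∧ a * y ∈ K ⊔ Ideal.span {y₀}
  · left
    obtain ⟨a, hay, haymem⟩ := hcase
    have haP : a ∉ P := fun h => hay ((hPiff a).mp h)
    obtain ⟨k, hk, c, hc, hsum⟩ := Submodule.mem_sup.mp haymem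
    obtain ⟨d, hd⟩ := Ideal.mem_span_singleton'.mp hc
    have key : a * y = k + d * y₀ := by rw [hd, hsum]
    have hdy₀ : d * y₀ ∉ K := by
      intro h
      exact hay (key ▸ K.add_mem hk h)
    have hdp : d ∉ p := fun h => hdy₀ ((hyK d).mp h)
    have hPle : P ≤ p := by
      intro r hr
      have hry : r * y ∈ K := (hPiff r).mp hr
      have h2 : (r * d) * y₀ ∈ K := by
        have h1 : (r * d) * y₀ = a * (r * y) - r * k := by
          linear_combination (-r) * key
        rw [h1]
        exact K.sub_mem (K.mul_mem_left a hry) (K.mul_mem_left r hk)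
      exact (hpprime.mul_mem_iff_mem_or_mem.mp ((hyK _).mpr h2)).resolve_right hdp
    have hple : p ≤ P := by
      intro r hr
      have hry₀ : r * y₀ ∈ K := (hyK r).mp hr
      have h2 : (r * a) * y ∈ K := by
        have h1 : (r * a) * y = r * k + d * (r * y₀) := by
          linear_combination r * key
        rw [h1]
        exact K.add_mem (K.mul_mem_left r hk) (K.mul_mem_left d hry₀)
      exact (hPp.mul_mem_iff_mem_or_mem.mp ((hPiff _).mpr h2)).resolve_right haP
    exact le_antisymm hPle hple
  · right
    push_neg at hcase
    refine ⟨hPp, y, ?_, ?_⟩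
    · intro h
      exact hcase 1 (by simpa using hyP) (by simpa using h)
    · rw [hPy]
      ext r
      rw [mem_colon_singleton', mem_colon_singleton']
      exact ⟨fun h => Ideal.mem_sup_left h,
        fun h => by_contra fun hno => (hcase r hno) h⟩

end ColonPrimes
section Avoid

variable {R : Type*} [CommRing R]

/-- `x` is a regular element on `R ⧸ I`, in ideal language. -/
def regE (I : Ideal R) (x : R) : Prop := ∀ r, x * r ∈ I → r ∈ I

/-- `regseq I xs` : `xs` is a weakly regular sequence on `R ⧸ I`. -/
def regseq : Ideal R → List R → Prop
  | _, [] => True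
  | I, x :: xs => regE I x ∧ regseq (I ⊔ Ideal.span {x}) xs

/-- iterated enlargement of an ideal by a list -/
def idl : Ideal R → List R → Ideal R
  | I, [] => I
  | I, x :: xs => idl (I ⊔ Ideal.span {x}) xs

variable [IsNoetherianRing R] [IsLocalRing R]

lemma max_le_of_subset_union {s : Finset (Ideal R)} (hp : ∀ p ∈ s, Ideal.IsPrime p)
    (hsub : (maximalIdeal R : Set R) ⊆ ⋃ p ∈ s, ↑p) :
    ∃ p ∈ s, maximalIdeal R = p := by
  have := (Ideal.subset_union_prime (f := fun p : Ideal R => p) ⊥ ⊥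
    (fun i hi _ _ => hp i hi)).mp hsub
  obtain ⟨p, hps, hle⟩ := this
  exact ⟨p, hps, le_antisymm hle (IsLocalRing.le_maximalIdeal (hp p hps).ne_top)⟩

lemma exists_colon_witness (K : Ideal R)
    (h : ∀ z ∈ maximalIdeal R, ∃ y, y ∉ K ∧ z * y ∈ K) :
    ∃ y, y ∉ K ∧ ∀ z ∈ maximalIdeal R, z * y ∈ K := by
  have hfin := colonPrimes_finite K
  have hsub : (maximalIdeal R : Set R) ⊆ ⋃ p ∈ hfin.toFinset, (p : Set R) := by
    intro z hz
    obtain ⟨y, hy, hzy⟩ := h z hz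
    obtain ⟨p, hpmem, hple⟩ := exists_max_colon_prime K hy
    have : z ∈ p := hple (mem_colon_singleton'.mpr hzy)
    exact Set.mem_biUnion (hfin.mem_toFinset.mpr hpmem) this
  obtain ⟨p, hps, heq⟩ := max_le_of_subset_union
    (fun p hps => ((hfin.mem_toFinset.mp hps).1)) hsub
  obtain ⟨hprime, y, hy, hpy⟩ := hfin.mem_toFinset.mp hps
  refine ⟨y, hy, fun z hz => ?_⟩
  have : z ∈ p := heq ▸ hz
  rw [hpy] at this
  exact mem_colon_singleton'.mp this

lemma exists_common_regE (A B : Ideal R) {a b : R} (ha : a ∈ maximalIdeal R)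
    (hb : b ∈ maximalIdeal R) (hra : regE A a) (hrb : regE B b) :
    ∃ z ∈ maximalIdeal R, regE A z ∧ regE B z := by
  classical
  by_contra hcon
  push_neg at hcon
  have hfA := colonPrimes_finite A
  have hfB := colonPrimes_finite B
  have hsub : (maximalIdeal R : Set R) ⊆
      ⋃ p ∈ hfA.toFinset ∪ hfB.toFinset, (p : Set R) := by
    intro z hz
    have h1 := hcon z hz
    have : ¬ regE A z ∨ ¬ regE B z := by tauto
    rcases this with hno | hno
    · rw [regE] at hno; push_neg at hno
      obtain ⟨r, hzr, hr⟩ := hno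
      obtain ⟨p, hpmem, hple⟩ := exists_max_colon_prime A hr
      exact Set.mem_biUnion (Finset.mem_union_left _ (hfA.mem_toFinset.mpr hpmem))
        (hple (mem_colon_singleton'.mpr hzr))
    · rw [regE] at hno; push_neg at hno
      obtain ⟨r, hzr, hr⟩ := hno
      obtain ⟨p, hpmem, hple⟩ := exists_max_colon_prime B hr
      exact Set.mem_biUnion (Finset.mem_union_right _ (hfB.mem_toFinset.mpr hpmem))
        (hple (mem_colon_singleton'.mpr hzr))
  obtain ⟨p, hps, heq⟩ := max_le_of_subset_union (fun p hps => by
    rcases Finset.mem_union.mp hps with h | h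
    exacts [(hfA.mem_toFinset.mp h).1, (hfB.mem_toFinset.mp h).1]) hsub
  rcases Finset.mem_union.mp hps with h | h
  · obtain ⟨hprime, y, hy, hpy⟩ := hfA.mem_toFinset.mp h
    have : a ∈ p := heq ▸ ha
    rw [hpy] at this
    exact hy (hra y (mem_colon_singleton'.mp this))
  · obtain ⟨hprime, y, hy, hpy⟩ := hfB.mem_toFinset.mp h
    have : b ∈ p := heq ▸ hb
    rw [hpy] at this
    exact hy (hrb y (mem_colon_singleton'.mp this))

end Avoid
section RegSeq

variable {R : Type*} [CommRing R]

@[simp] lemma regseq_nil (I : Ideal R) : regseq I ([] : List R) := trivial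
lemma regseq_cons {I : Ideal R} {x : R} {xs : List R} :
    regseq I (x :: xs) ↔ regE I x ∧ regseq (I ⊔ Ideal.span {x}) xs := Iff.rfl
@[simp] lemma idl_nil (I : Ideal R) : idl I ([] : List R) = I := rfl
lemma idl_cons (I : Ideal R) (x : R) (xs : List R) :
    idl I (x :: xs) = idl (I ⊔ Ideal.span {x}) xs := rfl

lemma idl_eq (I : Ideal R) (xs : List R) : idl I xs = I ⊔ Ideal.ofList xs := by
  induction xs generalizing I with
  | nil => simp
  | cons x xs ih => rw [idl_cons, ih, Ideal.ofList_cons, sup_assoc]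

lemma idl_append (I : Ideal R) (xs ys : List R) :
    idl I (xs ++ ys) = idl (idl I xs) ys := by
  induction xs generalizing I with
  | nil => rfl
  | cons x xs ih => rw [List.cons_append, idl_cons, idl_cons, ih]

lemma idl_rotate (I : Ideal R) (xs : List R) (z : R) :
    idl I (xs ++ [z]) = idl (I ⊔ Ideal.span {z}) xs := by
  rw [idl_eq, idl_eq, Ideal.ofList_append, Ideal.ofList_singleton]
  rw [sup_assoc, sup_comm (Ideal.ofList xs), ← sup_assoc]

lemma regseq_congr {I J : Ideal R} {xs : List R} (h : I = J) (hr : regseq I xs) :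
    regseq J xs := h ▸ hr

lemma regseq_append {I : Ideal R} {xs ys : List R} :
    regseq I (xs ++ ys) ↔ regseq I xs ∧ regseq (idl I xs) ys := by
  induction xs generalizing I with
  | nil => simp
  | cons x xs ih =>
    rw [List.cons_append, regseq_cons, regseq_cons, ih, idl_cons, and_assoc]

lemma regE_pow {I : Ideal R} {x : R} (h : regE I x) : ∀ k : ℕ, regE I (x ^ k) := by
  intro k
  induction k with
  | zero => intro r hr; simpa using hr
  | succ k ih =>
    intro r hr
    apply ih r
    apply h
    rw [show x * (x ^ k * r) = x ^ (k + 1) * r by ring]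
    exact hr

lemma mem_sup_span_iff {I : Ideal R} {x v : R} :
    v ∈ I ⊔ Ideal.span {x} ↔ ∃ i ∈ I, ∃ c : R, v = i + c * x := by
  rw [Submodule.mem_sup]
  constructor
  · rintro ⟨i, hi, s, hs, hsum⟩
    obtain ⟨c, hc⟩ := Ideal.mem_span_singleton'.mp hs
    exact ⟨i, hi, c, by rw [hc, hsum]⟩
  · rintro ⟨i, hi, c, rfl⟩
    exact ⟨i, hi, c * x, Ideal.mem_span_singleton'.mpr ⟨c, rfl⟩, rfl⟩

variable [IsNoetherianRing R] [IsLocalRing R]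
open IsLocalRing

lemma mem_of_forall_sup_pow {I : Ideal R} {a r : R} (ha : a ∈ maximalIdeal R)
    (h : ∀ k : ℕ, r ∈ I ⊔ Ideal.span {a} ^ k) : r ∈ I := by
  have hne : Ideal.span {a} ≠ ⊤ :=
    ne_top_of_le_ne_top (Ideal.IsMaximal.ne_top (maximalIdeal.isMaximal R))
      (Ideal.span_le.mpr (Set.singleton_subset_iff.mpr ha))
  have hkrull := Ideal.iInf_pow_smul_eq_bot_of_isLocalRing
    (I := Ideal.span {a}) (M := R ⧸ I) hne
  have hmem : I.mkQ r ∈ (⨅ i : ℕ, Ideal.span {a} ^ i • ⊤ : Submodule R (R ⧸ I)) := by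
    rw [Submodule.mem_iInf]
    intro k
    obtain ⟨i, hi, s, hs, hsum⟩ := Submodule.mem_sup.mp (h k)
    have : I.mkQ r = s • I.mkQ 1 := by
      rw [← map_smul, smul_eq_mul, mul_one, ← hsum, map_add]
      have hi0 : I.mkQ i = 0 := by
        simpa [Submodule.mkQ_apply] using (Submodule.Quotient.mk_eq_zero I).mpr hi
      rw [hi0, zero_add]
    rw [this]
    exact Submodule.smul_mem_smul hs Submodule.mem_top
  rw [hkrull] at hmem
  rw [Submodule.mem_bot] at hmem
  exact (Submodule.Quotient.mk_eq_zero I).mp hmem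

lemma regE_swap {I : Ideal R} {a b : R} (ha : regE I a) (hb : regE (I ⊔ Ideal.span {a}) b)
    (ham : a ∈ maximalIdeal R) : regE I b ∧ regE (I ⊔ Ideal.span {b}) a := by
  constructor
  · intro r hbr
    apply mem_of_forall_sup_pow ham
    intro k
    induction k with
    | zero => simp
    | succ k ih =>
      rw [Ideal.span_singleton_pow] at ih
      obtain ⟨i, hi, c, rfl⟩ := mem_sup_span_iff.mp ih
      have h1 : a ^ k * (b * c) ∈ I := by
        have : b * (i + c * a ^ k) - b * i ∈ I := I.sub_mem hbr (I.mul_mem_left b hi)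
        rw [show b * (i + c * a ^ k) - b * i = a ^ k * (b * c) by ring] at this
        exact this
      have h2 : c ∈ I ⊔ Ideal.span {a} := hb c (Ideal.mem_sup_left (regE_pow ha k _ h1))
      obtain ⟨i', hi', c', rfl⟩ := mem_sup_span_iff.mp h2
      rw [Ideal.span_singleton_pow]
      rw [show i + (i' + c' * a) * a ^ k = (i + i' * a ^ k) + c' * a ^ (k + 1) by ring]
      exact Submodule.add_mem_sup (I.add_mem hi (I.mul_mem_right _ hi'))
        (Ideal.mem_span_singleton'.mpr ⟨c', rfl⟩)
  · intro r har
    obtain ⟨i, hi, c, hc⟩ := mem_sup_span_iff.mp har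
    have hbc : b * c ∈ I ⊔ Ideal.span {a} := by
      have heq : b * c = a * r - i := by rw [hc]; ring
      rw [heq]
      exact Submodule.sub_mem _
        (Ideal.mem_sup_right (Ideal.mem_span_singleton'.mpr ⟨r, by ring⟩))
        (Ideal.mem_sup_left hi)
    obtain ⟨i', hi', c', rfl⟩ := mem_sup_span_iff.mp (hb c hbc)
    have h3 : a * (r - c' * b) ∈ I := by
      have heq : a * (r - c' * b) = i + i' * b := by linear_combination hc
      rw [heq]; exact I.add_mem hi (I.mul_mem_right b hi')
    have h4 : r - c' * b ∈ I := ha _ h3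
    rw [show r = (r - c' * b) + c' * b by ring]
    exact Submodule.add_mem _ (Ideal.mem_sup_left h4)
      (Ideal.mem_sup_right (Ideal.mem_span_singleton'.mpr ⟨c', rfl⟩))

end RegSeq
section Compare

variable {R : Type*} [CommRing R] [IsNoetherianRing R] [IsLocalRing R]
open IsLocalRing

/-- The module-theoretic content of "depth ≤ 1 transfer": if the socle-type condition holds
for `I ⊔ (x)` then it holds for `I ⊔ (y)`, for `x, y` regular on `R ⧸ I`. -/
lemma E_swap {I : Ideal R} {x y : R} (hx : regE I x) (hy : regE I y)
    (hym : y ∈ maximalIdeal R) {z : R} (hz1 : z ∉ I ⊔ Ideal.span {x})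
    (hz2 : ∀ t ∈ maximalIdeal R, t * z ∈ I ⊔ Ideal.span {x}) :
    ∃ w, w ∉ I ⊔ Ideal.span {y} ∧ ∀ t ∈ maximalIdeal R, t * w ∈ I ⊔ Ideal.span {y} := by
  obtain ⟨i, hi, w, hyz⟩ := mem_sup_span_iff.mp (hz2 y hym)
  refine ⟨w, ?_, ?_⟩
  · intro hwmem
    obtain ⟨i', hi', v, hw⟩ := mem_sup_span_iff.mp hwmem
    have h1 : y * (z - x * v) ∈ I := by
      have heq : y * (z - x * v) = i + i' * x := by
        rw [hw] at hyz; linear_combination hyz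
      rw [heq]; exact I.add_mem hi (I.mul_mem_right x hi')
    exact hz1 (by
      rw [show z = (z - x * v) + v * x by ring]
      exact Submodule.add_mem _ (Ideal.mem_sup_left (hy _ h1))
        (Ideal.mem_sup_right (Ideal.mem_span_singleton'.mpr ⟨v, rfl⟩)))
  · intro t ht
    obtain ⟨it, hit, ut, htz⟩ := mem_sup_span_iff.mp (hz2 t ht)
    have h1 : x * (t * w - y * ut) ∈ I := by
      have heq : x * (t * w - y * ut) = y * it - t * i := by
        linear_combination y * htz - t * hyz
      rw [heq]; exact I.sub_mem (I.mul_mem_left y hit) (I.mul_mem_left t hi)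
    rw [show t * w = (t * w - y * ut) + ut * y by ring]
    exact Submodule.add_mem _ (Ideal.mem_sup_left (hx _ h1))
      (Ideal.mem_sup_right (Ideal.mem_span_singleton'.mpr ⟨ut, rfl⟩))

lemma regseq_swap_head {I : Ideal R} {a b : R} {t : List R} (ham : a ∈ maximalIdeal R)
    (h : regseq I (a :: b :: t)) : regseq I (b :: a :: t) := by
  obtain ⟨ha, hb, ht⟩ := h
  obtain ⟨hb', ha'⟩ := regE_swap ha hb ham
  exact ⟨hb', ha', regseq_congr (by rw [sup_assoc, sup_assoc, sup_comm (Ideal.span {a})]) ht⟩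

lemma regseq_rotate {I : Ideal R} {xs : List R} {z : R}
    (hxs : ∀ u ∈ xs, u ∈ maximalIdeal R) (h : regseq I (xs ++ [z])) :
    regseq I (z :: xs) := by
  induction xs generalizing I with
  | nil => exact h
  | cons a t ih =>
    rw [List.cons_append, regseq_cons] at h
    have h2 : regseq (I ⊔ Ideal.span {a}) (z :: t) :=
      ih (fun u hu => hxs u (List.mem_cons_of_mem a hu)) h.2
    exact regseq_swap_head (hxs a List.mem_cons_self) ⟨h.1, h2⟩

lemma E_compare : ∀ (n : ℕ) (I : Ideal R) (xs ys : List R), xs.length = n → ys.length = n →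
    (∀ u ∈ xs, u ∈ maximalIdeal R) → (∀ u ∈ ys, u ∈ maximalIdeal R) →
    regseq I xs → regseq I ys →
    (∃ w, w ∉ idl I xs ∧ ∀ t ∈ maximalIdeal R, t * w ∈ idl I xs) →
    (∃ w, w ∉ idl I ys ∧ ∀ t ∈ maximalIdeal R, t * w ∈ idl I ys) := by
  intro n
  induction n with
  | zero =>
    intro I xs ys hxl hyl _ _ _ _ hE
    rw [List.length_eq_zero_iff] at hxl hyl
    subst hxl; subst hyl
    exact hE
  | succ n ih =>
    intro I xs ys hxl hyl hxm hym hxr hyr hE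
    have hxne : xs ≠ [] := by intro h; subst h; simp at hxl
    have hyne : ys ≠ [] := by intro h; subst h; simp at hyl
    obtain ⟨xs', u, rfl⟩ : ∃ xs' u, xs = xs' ++ [u] :=
      ⟨xs.dropLast, xs.getLast hxne, (List.dropLast_append_getLast hxne).symm⟩
    obtain ⟨ys', v, rfl⟩ : ∃ ys' v, ys = ys' ++ [v] :=
      ⟨ys.dropLast, ys.getLast hyne, (List.dropLast_append_getLast hyne).symm⟩
    have hxl' : xs'.length = n := by simpa using hxl
    have hyl' : ys'.length = n := by simpa using hyl
    have hxm' : ∀ w ∈ xs', w ∈ maximalIdeal R := fun w hw => hxm w (by simp [hw])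
    have hym' : ∀ w ∈ ys', w ∈ maximalIdeal R := fun w hw => hym w (by simp [hw])
    have hum : u ∈ maximalIdeal R := hxm u (by simp)
    have hvm : v ∈ maximalIdeal R := hym v (by simp)
    rw [regseq_append] at hxr hyr
    obtain ⟨hxr', hu⟩ := hxr
    obtain ⟨hyr', hv⟩ := hyr
    rw [regseq_cons] at hu hv
    obtain ⟨z, hzm, hzA, hzB⟩ := exists_common_regE (idl I xs') (idl I ys') hum hvm hu.1 hv.1
    -- transfer E along last coordinate on the xs side
    rw [idl_append] at hE
    have hE1 : ∃ w, w ∉ idl I xs' ⊔ Ideal.span {z} ∧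
        ∀ t ∈ maximalIdeal R, t * w ∈ idl I xs' ⊔ Ideal.span {z} := by
      obtain ⟨w, hw1, hw2⟩ := hE
      have : idl (idl I xs') [u] = idl I xs' ⊔ Ideal.span {u} := rfl
      rw [this] at hw1 hw2
      exact E_swap hu.1 hzA hzm hw1 hw2
    -- rewrite as a statement over I ⊔ (z)
    have hid : idl I xs' ⊔ Ideal.span {z} = idl (I ⊔ Ideal.span {z}) xs' := by
      rw [← idl_rotate I xs' z, idl_append]; rfl
    rw [hid] at hE1
    have hxr2 : regseq (I ⊔ Ideal.span {z}) xs' := by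
      have h' : regseq I (xs' ++ [z]) := regseq_append.mpr ⟨hxr', hzA, regseq_nil _⟩
      exact (regseq_rotate hxm' h').2
    have hyr2 : regseq (I ⊔ Ideal.span {z}) ys' := by
      have h' : regseq I (ys' ++ [z]) := regseq_append.mpr ⟨hyr', hzB, regseq_nil _⟩
      exact (regseq_rotate hym' h').2
    have hE2 := ih (I ⊔ Ideal.span {z}) xs' ys' hxl' hyl' hxm' hym' hxr2 hyr2 hE1
    have hid2 : idl I ys' ⊔ Ideal.span {z} = idl (I ⊔ Ideal.span {z}) ys' := by
      rw [← idl_rotate I ys' z, idl_append]; rfl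
    rw [← hid2] at hE2
    obtain ⟨w, hw1, hw2⟩ := hE2
    obtain ⟨w', hw1', hw2'⟩ := E_swap hzB hv.1 hvm hw1 hw2
    rw [idl_append]
    exact ⟨w', hw1', hw2'⟩

end Compare
section Bound

variable {R : Type*} [CommRing R] [IsNoetherianRing R] [IsLocalRing R]
open IsLocalRing

lemma regseq_length_le : ∃ k : ℕ, ∀ xs : List R,
    (∀ u ∈ xs, u ∈ maximalIdeal R) → regseq ⊥ xs → xs.length ≤ k := by
  obtain ⟨I₀, ⟨xs₀, hxs₀m, hxs₀r, hI₀⟩, hmax⟩ :=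
    (set_has_maximal_iff_noetherian.mpr inferInstance)
      {I : Ideal R | ∃ xs, (∀ u ∈ xs, u ∈ maximalIdeal R) ∧ regseq ⊥ xs ∧ I = idl ⊥ xs}
      ⟨⊥, [], by simp, regseq_nil _, rfl⟩
  have hIle : I₀ ≤ maximalIdeal R := by
    rw [hI₀, idl_eq, bot_sup_eq]
    exact Ideal.span_le.mpr (fun r hr => hxs₀m r hr)
  have hInetop : (1 : R) ∉ I₀ := fun h =>
    (Ideal.ne_top_iff_one (maximalIdeal R)).mp (Ideal.IsMaximal.ne_top inferInstance) (hIle h)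
  -- no element of m is regular on R ⧸ I₀
  have hnoreg : ∀ z ∈ maximalIdeal R, ¬ regE I₀ z := by
    intro z hz hreg
    have hzI : z ∉ I₀ := fun h => hInetop (hreg 1 (by simpa using h))
    have hmem : idl ⊥ (xs₀ ++ [z]) ∈
        {I : Ideal R | ∃ xs, (∀ u ∈ xs, u ∈ maximalIdeal R) ∧ regseq ⊥ xs ∧ I = idl ⊥ xs} := by
      refine ⟨xs₀ ++ [z], ?_, ?_, rfl⟩
      · intro u hu
        rcases List.mem_append.mp hu with h | h
        · exact hxs₀m u h
        · simpa using (List.mem_singleton.mp h) ▸ hz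
      · exact regseq_append.mpr ⟨hxs₀r, (hI₀ ▸ hreg : regE (idl ⊥ xs₀) z), regseq_nil _⟩
    have hlt : I₀ < idl ⊥ (xs₀ ++ [z]) := by
      rw [idl_append, ← hI₀]
      refine lt_of_le_of_ne le_sup_left fun h => hzI ?_
      rw [show idl I₀ [z] = I₀ ⊔ Ideal.span {z} from rfl] at h
      rw [h]
      exact Ideal.mem_sup_right (Ideal.mem_span_singleton_self z)
    exact hmax _ hmem hlt
  have hE0 : ∃ w, w ∉ I₀ ∧ ∀ t ∈ maximalIdeal R, t * w ∈ I₀ := by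
    apply exists_colon_witness
    intro z hz
    by_contra hno
    push_neg at hno
    exact hnoreg z hz (fun r hr => by_contra fun h => hno r h hr)
  refine ⟨xs₀.length, fun xs hm hreg => ?_⟩
  by_contra hlong
  push_neg at hlong
  set k := xs₀.length
  have hts : (xs.take (k + 1)).length = k + 1 := by
    rw [List.length_take]; omega
  set ts := xs.take (k + 1) with hts_def
  have htsm : ∀ u ∈ ts, u ∈ maximalIdeal R := fun u hu => hm u (List.mem_of_mem_take hu)
  have htsr : regseq ⊥ ts := by
    have : xs = ts ++ xs.drop (k + 1) := (List.take_append_drop (k + 1) xs).symm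
    rw [this] at hreg
    exact (regseq_append.mp hreg).1
  have htsne : ts ≠ [] := by intro h; rw [h] at hts; simp at hts
  obtain ⟨ts', u, hts'⟩ : ∃ ts' u, ts = ts' ++ [u] :=
    ⟨ts.dropLast, ts.getLast htsne, (List.dropLast_append_getLast htsne).symm⟩
  have hts'l : ts'.length = k := by
    have := congrArg List.length hts'
    simp at this; omega
  have hts'm : ∀ w ∈ ts', w ∈ maximalIdeal R := fun w hw => htsm w (by simp [hts', hw])
  have hum : u ∈ maximalIdeal R := htsm u (by simp [hts'])
  rw [hts'] at htsr
  rw [regseq_append] at htsr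
  have hE1 := E_compare k ⊥ xs₀ ts' rfl hts'l hxs₀m hts'm hxs₀r htsr.1
    (by rw [← hI₀]; exact hE0)
  obtain ⟨w, hw1, hw2⟩ := hE1
  exact hw1 (htsr.2.1 w (hw2 u hum))

end Bound

section Bridge

variable {R : Type*} [CommRing R]
open RingTheory.Sequence Submodule
open scoped Pointwise

lemma mem_smul_top_iff' {M : Type*} [AddCommGroup M] [Module R M] (x : R) (q : M) :
    q ∈ x • (⊤ : Submodule R M) ↔ ∃ p : M, x • p = q := by
  rw [show x • (⊤ : Submodule R M) = Submodule.map (DistribMulAction.toLinearMap R M x) ⊤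
    from rfl]
  simp [Submodule.mem_map, DistribSMul.toLinearMap_apply]
  exact Iff.rfl

lemma smul_top_eq_span (x : R) : x • (⊤ : Submodule R R) = Ideal.span {x} := by
  ext r
  rw [mem_smul_top_iff', Ideal.mem_span_singleton']
  constructor
  · rintro ⟨s, rfl⟩; exact ⟨s, by rw [smul_eq_mul, mul_comm]⟩
  · rintro ⟨s, rfl⟩; exact ⟨s, by rw [smul_eq_mul, mul_comm]⟩

lemma smul_top_quot_eq (I : Ideal R) (x : R) :
    x • (⊤ : Submodule R (R ⧸ I)) = Submodule.map I.mkQ (I ⊔ Ideal.span {x}) := by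
  ext q
  rw [mem_smul_top_iff']
  constructor
  · rintro ⟨p, rfl⟩
    obtain ⟨r, rfl⟩ := Submodule.mkQ_surjective I p
    refine ⟨x * r, Ideal.mem_sup_right (Ideal.mem_span_singleton'.mpr ⟨r, mul_comm r x⟩), ?_⟩
    rw [← map_smul, smul_eq_mul]
  · rintro ⟨r, hr, rfl⟩
    obtain ⟨i, hi, c, rfl⟩ := mem_sup_span_iff.mp hr
    refine ⟨I.mkQ c, ?_⟩
    rw [← map_smul, smul_eq_mul, Submodule.mkQ_apply, Submodule.mkQ_apply,
      Submodule.Quotient.eq]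
    have heq : x * c - (i + c * x) = -i := by ring
    rw [heq]
    exact I.neg_mem hi

/-- `QuotSMulTop x (R ⧸ I)` is `R ⧸ (I ⊔ (x))`. -/
noncomputable def quotQuotEquiv (I : Ideal R) (x : R) :
    QuotSMulTop x (R ⧸ I) ≃ₗ[R] R ⧸ (I ⊔ Ideal.span {x}) :=
  (Submodule.quotEquivOfEq _ _ (smul_top_quot_eq I x)) ≪≫ₗ
    Submodule.quotientQuotientEquivQuotient I (I ⊔ Ideal.span {x}) le_sup_left

lemma isSMulRegular_quot_iff (I : Ideal R) (x : R) :
    IsSMulRegular (R ⧸ I) x ↔ regE I x := by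
  constructor
  · intro h r hxr
    have : x • I.mkQ r = x • I.mkQ 0 := by
      rw [← map_smul, ← map_smul, smul_eq_mul, smul_zero, map_zero]
      exact (Submodule.Quotient.mk_eq_zero I).mpr hxr
    have := h this
    rwa [map_zero, Submodule.mkQ_apply, Submodule.Quotient.mk_eq_zero] at this
  · intro h q1 q2 heq
    obtain ⟨a, rfl⟩ := Submodule.mkQ_surjective I q1
    obtain ⟨b, rfl⟩ := Submodule.mkQ_surjective I q2
    have h2 : x * a - x * b ∈ I := by
      rw [← Submodule.Quotient.eq]
      simpa only [← map_smul, smul_eq_mul, Submodule.mkQ_apply, ← Submodule.Quotient.mk_smul] using heq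
    rw [Submodule.mkQ_apply, Submodule.mkQ_apply, Submodule.Quotient.eq]
    exact h _ (by rwa [← mul_sub] at h2)

lemma regseq_of_isWeaklyRegular {I : Ideal R} {xs : List R}
    (h : IsWeaklyRegular (R ⧸ I) xs) : regseq I xs := by
  induction xs generalizing I with
  | nil => exact regseq_nil _
  | cons x xs ih =>
    rw [isWeaklyRegular_cons_iff] at h
    refine ⟨(isSMulRegular_quot_iff I x).mp h.1, ih ?_⟩
    exact ((quotQuotEquiv I x).isWeaklyRegular_congr xs).mp h.2

lemma regseq_of_isWeaklyRegular_self {xs : List R} (h : IsWeaklyRegular R xs) :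
    regseq (⊥ : Ideal R) xs :=
  regseq_of_isWeaklyRegular
    (((Submodule.quotEquivOfEqBot (⊥ : Ideal R) rfl).symm.isWeaklyRegular_congr xs).mp h)

end Bridge
section Key

variable {R : Type*} [CommRing R] [IsNoetherianRing R] [IsLocalRing R]
open IsLocalRing RingTheory.Sequence Submodule
open scoped Pointwise

lemma isRegular_pair {x z : R} (hx : x ∈ maximalIdeal R) (hz : z ∈ maximalIdeal R)
    (hrx : regE (⊥ : Ideal R) x) (hrz : regE (Ideal.span {x}) z) :
    RingTheory.Sequence.IsRegular R [x, z] := by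
  rw [RingTheory.Sequence.isRegular_iff]
  constructor
  · rw [isWeaklyRegular_cons_iff]
    constructor
    · intro a b hab
      have hab' : x * a = x * b := hab
      have h2 : x * (a - b) ∈ (⊥ : Ideal R) := by rw [mul_sub, hab']; simp
      have := hrx _ h2
      rw [Ideal.mem_bot, sub_eq_zero] at this
      exact this
    · have e : QuotSMulTop x R ≃ₗ[R] R ⧸ Ideal.span {x} :=
        Submodule.quotEquivOfEq _ _ (smul_top_eq_span x)
      rw [e.isWeaklyRegular_congr, RingTheory.Sequence.isWeaklyRegular_singleton_iff,
        isSMulRegular_quot_iff]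
      exact hrz
  · intro htop
    have hle : Ideal.ofList [x, z] ≤ maximalIdeal R := by
      apply Ideal.span_le.mpr
      intro r hr
      have : r = x ∨ r = z := by simpa using hr
      rcases this with rfl | rfl
      exacts [hx, hz]
    have h1 : (1 : R) ∈ Ideal.ofList [x, z] • (⊤ : Submodule R R) := htop ▸ trivial
    have h2 : Ideal.ofList [x, z] • (⊤ : Submodule R R) ≤
        (maximalIdeal R : Submodule R R) := by
      apply Submodule.smul_le.mpr
      intro r hr n _
      exact (maximalIdeal R).mul_mem_right n (hle hr)
    exact (Ideal.ne_top_iff_one (maximalIdeal R)).mp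
      (Ideal.IsMaximal.ne_top inferInstance) (h2 h1)

/-- The key consequence of `depth R ≤ 1` : there are `x y` with `x` regular (or zero),
`y ∉ (x)` and `y ⬝ m ⊆ (x)`. -/
lemma key_xy (hdepth : rdepth R R ≤ 1) :
    ∃ x y : R, (x = 0 ∨ regE (⊥ : Ideal R) x) ∧ y ∉ Ideal.span {x} ∧
      ∀ z ∈ maximalIdeal R, z * y ∈ Ideal.span {x} := by
  by_cases hex : ∃ x ∈ maximalIdeal R, regE (⊥ : Ideal R) x
  · obtain ⟨x, hxm, hx⟩ := hex
    have hcl : ∀ z ∈ maximalIdeal R, ∃ y, y ∉ Ideal.span {x} ∧ z * y ∈ Ideal.span {x} := by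
      intro z hz
      by_contra hno
      push_neg at hno
      have hrz : regE (Ideal.span {x}) z := fun r hr => by_contra fun h => hno r h hr
      have h2S : (2 : ℕ) ∈ {n : ℕ | ∃ rs : List R, rs.length = n ∧
          (∀ r ∈ rs, r ∈ maximalIdeal R) ∧ RingTheory.Sequence.IsRegular R rs} := by
        refine ⟨[x, z], rfl, ?_, isRegular_pair hxm hz hx hrz⟩
        intro r hr
        have : r = x ∨ r = z := by simpa using hr
        rcases this with rfl | rfl
        exacts [hxm, hz]
      obtain ⟨k, hk⟩ := regseq_length_le (R := R)
      have hbdd : BddAbove {n : ℕ | ∃ rs : List R, rs.length = n ∧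
          (∀ r ∈ rs, r ∈ maximalIdeal R) ∧ RingTheory.Sequence.IsRegular R rs} := by
        refine ⟨k, fun n hn => ?_⟩
        obtain ⟨rs, rfl, hrs, hreg⟩ := hn
        exact hk rs hrs (regseq_of_isWeaklyRegular_self hreg.toIsWeaklyRegular)
      have hd2 : (2 : ℕ) ≤ rdepth R R := le_csSup hbdd h2S
      exact absurd (le_trans hd2 hdepth) (by norm_num)
    obtain ⟨y, hy1, hy2⟩ := exists_colon_witness (Ideal.span {x}) hcl
    exact ⟨x, y, Or.inr hx, hy1, hy2⟩
  · push_neg at hex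
    have hcl : ∀ z ∈ maximalIdeal R, ∃ y, y ∉ (⊥ : Ideal R) ∧ z * y ∈ (⊥ : Ideal R) := by
      intro z hz
      have := hex z hz
      rw [regE] at this
      push_neg at this
      obtain ⟨r, hzr, hr⟩ := this
      exact ⟨r, hr, hzr⟩
    obtain ⟨y, hy1, hy2⟩ := exists_colon_witness ⊥ hcl
    refine ⟨0, y, Or.inl rfl, ?_, ?_⟩
    · rwa [Ideal.span_singleton_eq_bot.mpr rfl]
    · rw [Ideal.span_singleton_eq_bot.mpr rfl]
      exact hy2

/-- Key lemma: if `depth R ≤ 1` and `ψ : M → R` has image inside `m`, then every functional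
on `M^*` sends `ψ` into `m`. -/
lemma dual_apply_mem (hdepth : rdepth R R ≤ 1) {M : Type*} [AddCommGroup M] [Module R M]
    (ψ : M →ₗ[R] R) (hψ : ∀ v, ψ v ∈ maximalIdeal R)
    (h : (M →ₗ[R] R) →ₗ[R] R) : h ψ ∈ maximalIdeal R := by
  obtain ⟨x, y, hx, hy, hym⟩ := key_xy hdepth
  have hφ' : ∃ φ' : M →ₗ[R] R, ∀ v, x * φ' v = y * ψ v := by
    rcases hx with rfl | hreg
    · refine ⟨0, fun v => ?_⟩
      have := hym (ψ v) (hψ v)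
      rw [Ideal.span_singleton_eq_bot.mpr rfl, Ideal.mem_bot] at this
      rw [mul_comm] at this
      simp [this]
    · have hex : ∀ v : M, ∃ c, x * c = y * ψ v := by
        intro v
        obtain ⟨a, ha⟩ := Ideal.mem_span_singleton'.mp (hym (ψ v) (hψ v))
        refine ⟨a, ?_⟩
        rw [mul_comm x a, ha, mul_comm]
      have cancel : ∀ a b : R, x * a = x * b → a = b := by
        intro a b hab
        have h2 : x * (a - b) ∈ (⊥ : Ideal R) := by rw [mul_sub, hab]; simp
        have := hreg _ h2
        rwa [Ideal.mem_bot, sub_eq_zero] at this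
      refine ⟨{ toFun := fun v => (hex v).choose,
                map_add' := ?_, map_smul' := ?_ }, fun v => (hex v).choose_spec⟩
      · intro v w
        apply cancel
        rw [mul_add, (hex v).choose_spec, (hex w).choose_spec, (hex (v + w)).choose_spec,
          map_add, mul_add]
      · intro c v
        apply cancel
        rw [(hex (c • v)).choose_spec, RingHom.id_apply, map_smul, smul_eq_mul]
        rw [smul_eq_mul, show x * (c * (hex v).choose) = c * (x * (hex v).choose) by ring,
          (hex v).choose_spec]
        ring
  obtain ⟨φ', hφ'⟩ := hφ'
  by_contra hmem
  have hu : IsUnit (h ψ) := by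
    by_contra hnu
    exact hmem hnu
  obtain ⟨u, hu⟩ := hu
  have h1 : y * h ψ = x * h φ' := by
    rw [← smul_eq_mul, ← smul_eq_mul, ← map_smul, ← map_smul]
    congr 1
    ext v
    simp only [LinearMap.smul_apply, smul_eq_mul]
    exact (hφ' v).symm
  apply hy
  have h2 : y = (x * h φ') * ↑u⁻¹ := by
    rw [← h1, ← hu, mul_assoc, Units.mul_inv, mul_one]
  rw [h2]
  exact Ideal.mul_mem_right _ _ (Ideal.mem_span_singleton'.mpr ⟨h φ', mul_comm _ _⟩)

end Key
section Main

open IsLocalRing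

variable {R : Type u} [CommRing R]

/-- Easy direction: if `F` is a summand of `M`, then `F ≅ F^*` is a summand of `M^*`. -/
theorem summand_dual_of_summand [IsLocalRing R] (M : Type u) [AddCommGroup M] [Module R M]
    (F : Type u) [AddCommGroup F] [Module R F] [Module.Free R F] [Module.Finite R F]
    (h : IsDirectSummand R F M) : IsDirectSummand R F (M →ₗ[R] R) := by
  classical
  obtain ⟨f, g, hgf⟩ := h
  let ι := Module.Free.ChooseBasisIndex R F
  haveI : Fintype ι := Module.Free.ChooseBasisIndex.fintype R F
  let b : Module.Basis ι R F := Module.Free.chooseBasis R F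
  refine ⟨(LinearMap.lcomp R R g) ∘ₗ b.toDual,
    { toFun := fun φ => ∑ i, φ (f (b i)) • b i
      map_add' := by intro φ₁ φ₂; simp [add_smul, Finset.sum_add_distrib]
      map_smul' := by intro c φ; simp [smul_smul, Finset.smul_sum] }, ?_⟩
  ext v
  simp only [LinearMap.comp_apply, LinearMap.coe_mk, AddHom.coe_mk, LinearMap.lcomp_apply,
    LinearMap.id_apply]
  have hfb : ∀ i : ι, g (f (b i)) = b i := by
    intro i
    rw [← LinearMap.comp_apply, hgf, LinearMap.id_apply]
  calc ∑ i, (b.toDual v) (g (f (b i))) • b i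
      = ∑ i, (b.repr v i) • b i := by
        refine Finset.sum_congr rfl fun i _ => ?_
        rw [hfb i, Module.Basis.toDual_apply_left]
    _ = v := b.sum_repr v

/-- Hard direction: over a ring of depth ≤ 1, a free summand of `M^*` gives a free summand
of `M`. -/
theorem summand_of_summand_dual [IsNoetherianRing R] [IsLocalRing R]
    (hdepth : rdepth R R ≤ 1)
    (M : Type u) [AddCommGroup M] [Module R M]
    (F : Type u) [AddCommGroup F] [Module R F] [Module.Free R F] [Module.Finite R F]
    (h : IsDirectSummand R F (M →ₗ[R] R)) : IsDirectSummand R F M := by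
  classical
  obtain ⟨f, g, hgf⟩ := h
  let ι := Module.Free.ChooseBasisIndex R F
  haveI : Fintype ι := Module.Free.ChooseBasisIndex.fintype R F
  let b : Module.Basis ι R F := Module.Free.chooseBasis R F
  set Φ : M →ₗ[R] (ι → R) := LinearMap.pi (fun i => f (b i)) with hΦdef
  have hfg : ∀ (v : F), g (f v) = v := by
    intro v; rw [← LinearMap.comp_apply, hgf, LinearMap.id_apply]
  have hsurj : Function.Surjective Φ := by
    rw [← LinearMap.range_eq_top]
    by_contra hne
    set N := LinearMap.range Φ with hNdef
    set k := ResidueField R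
    -- image of N in (ι → k)
    let W : Submodule k (ι → k) :=
      { carrier := (fun (v : ι → R) => (fun i => residue R (v i))) '' (N : Set (ι → R))
        add_mem' := by
          rintro _ _ ⟨n1, hn1, rfl⟩ ⟨n2, hn2, rfl⟩
          exact ⟨n1 + n2, N.add_mem hn1 hn2, by funext i; simp⟩
        zero_mem' := ⟨0, N.zero_mem, by funext i; simp⟩
        smul_mem' := by
          rintro c _ ⟨n, hn, rfl⟩
          obtain ⟨r, rfl⟩ := IsLocalRing.residue_surjective (R := R) c
          exact ⟨r • n, N.smul_mem r hn, by funext i; simp⟩ }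
    have hres0 : ∀ r : R, residue R r = 0 ↔ r ∈ maximalIdeal R := fun r =>
      Ideal.Quotient.eq_zero_iff_mem
    have hWne : W ≠ ⊤ := by
      intro htop
      have hsup : N ⊔ (maximalIdeal R) • (⊤ : Submodule R (ι → R)) = ⊤ := by
        rw [eq_top_iff]
        intro v _
        have hv : (fun i => residue R (v i)) ∈ W := htop ▸ Submodule.mem_top
        obtain ⟨n, hn, heq⟩ := hv
        have hcoord : ∀ i, (v - n) i ∈ maximalIdeal R := by
          intro i
          have hni : residue R (n i) = residue R (v i) := congrFun heq i
          rw [← hres0]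
          show residue R (v i - n i) = 0
          rw [map_sub, hni, sub_self]
        have hmem2 : v - n ∈ (maximalIdeal R) • (⊤ : Submodule R (ι → R)) := by
          have hvn : v - n = ∑ i, ((v - n) i) • (Pi.single i (1 : R) : ι → R) := by
            funext j
            simp [Finset.sum_apply, Pi.single_apply, Finset.sum_ite_eq']
          rw [hvn]
          exact Submodule.sum_mem _ fun i _ =>
            Submodule.smul_mem_smul (hcoord i) Submodule.mem_top
        have : v = n + (v - n) := by ring
        rw [this]
        exact Submodule.add_mem _ (Submodule.mem_sup_left hn) (Submodule.mem_sup_right hmem2)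
      -- Nakayama
      apply hne
      haveI : Module.Finite R (ι → R) := inferInstance
      haveI : Module.Finite R ((ι → R) ⧸ N) := Module.Finite.quotient R N
      have hQtop : (⊤ : Submodule R ((ι → R) ⧸ N)) ≤
          (maximalIdeal R) • (⊤ : Submodule R ((ι → R) ⧸ N)) := by
        intro q _
        obtain ⟨v, rfl⟩ := N.mkQ_surjective q
        have hv : v ∈ N ⊔ (maximalIdeal R) • (⊤ : Submodule R (ι → R)) := by
          rw [hsup]; exact Submodule.mem_top
        obtain ⟨n, hn, w, hw, rfl⟩ := Submodule.mem_sup.mp hv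
        rw [map_add]
        have hn0 : N.mkQ n = 0 := by
          rw [Submodule.mkQ_apply, Submodule.Quotient.mk_eq_zero]; exact hn
        rw [hn0, zero_add]
        have : N.mkQ w ∈ Submodule.map N.mkQ ((maximalIdeal R) • ⊤) :=
          Submodule.mem_map_of_mem hw
        rw [Submodule.map_smul''] at this
        exact Submodule.smul_mono (le_refl (maximalIdeal R)) le_top this
      have hbot := Submodule.eq_bot_of_le_smul_of_le_jacobson_bot (maximalIdeal R) ⊤
        (Module.finite_def.mp inferInstance) hQtop
        (le_of_eq (IsLocalRing.jacobson_eq_maximalIdeal ⊥ bot_ne_top).symm)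
      rw [eq_top_iff]
      intro v _
      have : N.mkQ v = 0 := by
        have : N.mkQ v ∈ (⊤ : Submodule R ((ι → R) ⧸ N)) := Submodule.mem_top
        rw [hbot] at this
        simpa using this
      rwa [Submodule.mkQ_apply, Submodule.Quotient.mk_eq_zero] at this
    -- a functional vanishing on W
    obtain ⟨w₀, hw₀⟩ : ∃ w₀ : (ι → k), w₀ ∉ W := by
      by_contra hno
      push_neg at hno
      exact hWne (eq_top_iff.mpr fun w _ => hno w)
    have hq0 : W.mkQ w₀ ≠ 0 := fun h => hw₀ (by
      rwa [Submodule.mkQ_apply, Submodule.Quotient.mk_eq_zero] at h)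
    obtain ⟨ξ, hξ⟩ : ∃ ξ : ((ι → k) ⧸ W) →ₗ[k] k, ξ (W.mkQ w₀) ≠ 0 := by
      by_contra hno
      push_neg at hno
      exact hq0 ((Module.forall_dual_apply_eq_zero_iff k _).mp hno)
    set μ : (ι → k) →ₗ[k] k := ξ ∘ₗ W.mkQ with hμdef
    have hμW : ∀ w ∈ W, μ w = 0 := by
      intro w hw
      have : W.mkQ w = 0 := by
        rw [Submodule.mkQ_apply, Submodule.Quotient.mk_eq_zero]; exact hw
      simp [hμdef, this]
    have hμ0 : μ w₀ ≠ 0 := hξ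
    obtain ⟨i₀, hi₀⟩ : ∃ i, μ (Pi.single i (1 : k)) ≠ 0 := by
      by_contra hno
      push_neg at hno
      apply hμ0
      have hw0 : w₀ = ∑ i, (w₀ i) • (Pi.single i (1 : k) : ι → k) := by
        funext j
        simp [Finset.sum_apply, Pi.single_apply, Finset.sum_ite_eq']
      rw [hw0, map_sum]
      simp [hno]
    choose cc hcc using fun i => IsLocalRing.residue_surjective (R := R) (μ (Pi.single i (1 : k)))
    set τ : F := ∑ i, cc i • b i with hτdef
    set ψ : M →ₗ[R] R := f τ with hψdef
    have hψm : ∀ v, ψ v ∈ maximalIdeal R := by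
      intro v
      have h1 : ψ v = ∑ i, cc i * ((f (b i)) v) := by
        rw [hψdef, hτdef, map_sum]
        simp [LinearMap.sum_apply]
      rw [← hres0, h1, map_sum]
      have h2 : ∀ i, residue R (cc i * ((f (b i)) v))
          = (residue R ((f (b i)) v)) * μ (Pi.single i (1 : k)) := by
        intro i
        rw [map_mul, hcc i, mul_comm]
      rw [Finset.sum_congr rfl fun i _ => h2 i]
      have h3 : ∑ i, (residue R ((f (b i)) v)) * μ (Pi.single i (1 : k))
          = μ (fun i => residue R ((f (b i)) v)) := by
        have : (fun i => residue R ((f (b i)) v))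
            = ∑ i, (residue R ((f (b i)) v)) • (Pi.single i (1 : k) : ι → k) := by
          funext j
          simp [Finset.sum_apply, Pi.single_apply, Finset.sum_ite_eq']
        rw [this, map_sum]
        refine Finset.sum_congr rfl fun i _ => ?_
        rw [map_smul, smul_eq_mul]
      rw [h3]
      apply hμW
      exact ⟨Φ v, LinearMap.mem_range_self Φ v, rfl⟩
    have hkey := dual_apply_mem hdepth ψ hψm ((b.coord i₀) ∘ₗ g)
    have hgψ : ((b.coord i₀) ∘ₗ g) ψ = cc i₀ := by
      rw [LinearMap.comp_apply, hψdef, hfg τ, hτdef]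
      simp [Module.Basis.coord_apply, map_sum, Finsupp.single_apply, Finset.sum_ite_eq']
    rw [hgψ] at hkey
    apply hi₀
    rw [← hcc i₀]
    exact (hres0 _).mpr hkey
  obtain ⟨s, hs⟩ := Module.projective_lifting_property Φ LinearMap.id hsurj
  refine ⟨s ∘ₗ (b.equivFun.toLinearMap), (b.equivFun.symm.toLinearMap) ∘ₗ Φ, ?_⟩
  ext v
  simp only [LinearMap.comp_apply, LinearEquiv.coe_coe, LinearMap.id_apply]
  have : Φ (s (b.equivFun v)) = b.equivFun v := by
    rw [← LinearMap.comp_apply, hs, LinearMap.id_apply]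
  rw [this, LinearEquiv.symm_apply_apply]

end Main

theorem free_summand_dual_iff_of_depth_le_one {R : Type u} [CommRing R] [IsNoetherianRing R]
    [IsLocalRing R] (hdepth : rdepth R R ≤ 1)
    (M : Type u) [AddCommGroup M] [Module R M] [Module.Finite R M]
    (F : Type u) [AddCommGroup F] [Module R F] [Module.Free R F] [Module.Finite R F] :
    IsDirectSummand R F (M →ₗ[R] R) ↔ IsDirectSummand R F M :=
  ⟨summand_of_summand_dual hdepth M F, summand_dual_of_summand M F⟩
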